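/- arXiv:1708.08509 — 5 statements merged into one kernel-verified Lean document; each statement's English description precedes it below -/
import Mathlib

section
/- Let G be a finite group and let N be a normal subgroup of G. Let M be the intersection of all subgroups of N that are normal in G and maximal among the proper subgroups of N that are normal in G. Then M is normal in G, and the quotient N/M, regarded as a (G/M)-group via the conjugation action, is isomorphic as a (G/M)-group to a finite direct product of irreducible (G/M)-groups; moreover, for each abelian irreducible factor in this product, the conjugation action of the image of N in G/M on that factor is trivial (so the (G/M)-action on it factors through G/N). -/
section FGroupDefs

variable (F : Type*) [Group F]

/-- A subgroup of an `F`-group is a *normal `F`-subgroup* if it is normal and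
stable under the `F`-action. -/
def IsNormalFSubgroup {G : Type*} [Group G] [MulDistribMulAction F G]
    (H : Subgroup G) : Prop :=
  H.Normal ∧ ∀ (f : F) (x : G), x ∈ H → f • x ∈ H

/-- An *irreducible `F`-group* is a nontrivial `F`-group whose only normal
`F`-subgroups are the trivial subgroup and the whole group. -/
def IsIrreducibleFGroup (G : Type*) [Group G] [MulDistribMulAction F G] : Prop :=
  Nontrivial G ∧ ∀ H : Subgroup G, IsNormalFSubgroup F H → H = ⊥ ∨ H = ⊤

/-- `[s]_F`: the smallest normal `F`-subgroup containing the set `s`. -/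
def normalFClosure {G : Type*} [Group G] [MulDistribMulAction F G] (s : Set G) :
    Subgroup G :=
  sInf {H : Subgroup G | IsNormalFSubgroup F H ∧ s ⊆ H}

/-- A group homomorphism is an `F`-group morphism if it commutes with the `F`-actions. -/
def IsFHom {G G' : Type*} [Group G] [Group G'] [MulDistribMulAction F G]
    [MulDistribMulAction F G'] (φ : G →* G') : Prop :=
  ∀ (f : F) (x : G), φ (f • x) = f • φ x

/-- `h_F(G)`: the number of `F`-group endomorphisms of `G`. -/
noncomputable def hF (G : Type*) [Group G] [MulDistribMulAction F G] : ℕ :=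
  Nat.card {φ : G →* G // IsFHom F φ}

/-- Two `F`-groups are isomorphic if there is a bijective group homomorphism
between them commuting with the `F`-actions. -/
def IsFIso (G G' : Type*) [Group G] [Group G'] [MulDistribMulAction F G]
    [MulDistribMulAction F G'] : Prop :=
  ∃ e : G ≃* G', ∀ (f : F) (x : G), e (f • x) = f • e x

end FGroupDefs

/-- The intersection of all subgroups of `N` that are normal in `G` and maximal among
the proper subgroups of `N` normal in `G` (intersected with `N` itself). -/
def maxNormalCore {G : Type*} [Group G] (N : Subgroup G) : Subgroup G :=
  N ⊓ sInf {K : Subgroup G | K.Normal ∧ K < N ∧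
    ∀ K' : Subgroup G, K'.Normal → K' ≤ N → K < K' → K' = N}

instance maxNormalCore_normal {G : Type*} [Group G] (N : Subgroup G) [hN : N.Normal] :
    (maxNormalCore N).Normal := by
  constructor
  intro x hx g
  rw [maxNormalCore, Subgroup.mem_inf, Subgroup.mem_sInf] at hx ⊢
  exact ⟨hN.conj_mem x hx.1 g, fun K hK => hK.1.conj_mem x (hx.2 K hK) g⟩

instance map_mk'_normal {G : Type*} [Group G] (M N : Subgroup G) [M.Normal]
    [hN : N.Normal] : (N.map (QuotientGroup.mk' M)).Normal :=
  hN.map _ (QuotientGroup.mk'_surjective M)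



/-- Transport a `MulDistribMulAction` along a `MulEquiv`. -/
def MulEquiv.transportAction {F α β : Type*} [Group F] [Group α] [Group β]
    [MulDistribMulAction F β] (e : α ≃* β) : MulDistribMulAction F α where
  smul f a := e.symm (f • e a)
  one_smul a := by
    show e.symm ((1 : F) • e a) = a
    simp
  mul_smul f g a := by
    show e.symm ((f * g) • e a) = e.symm (f • e (e.symm (g • e a)))
    simp [mul_smul]
  smul_mul f a b := by
    show e.symm (f • e (a * b)) = e.symm (f • e a) * e.symm (f • e b)
    rw [map_mul, smul_mul', ← map_mul]
  smul_one f := by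
    show e.symm (f • e 1) = 1
    simp

theorem MulEquiv.transportAction_spec {F α β : Type*} [Group F] [Group α] [Group β]
    [MulDistribMulAction F β] (e : α ≃* β) (f : F) (a : α) :
    letI := e.transportAction (F := F)
    e (f • a) = f • e a := e.apply_symm_apply _

/-- Transfer irreducibility along an equivariant isomorphism. -/
theorem isIrreducible_of_iso {F α β : Type*} [Group F] [Group α] [Group β]
    [MulDistribMulAction F α] [MulDistribMulAction F β] (e : α ≃* β)
    (he : ∀ (f : F) (a : α), e (f • a) = f • e a)
    (h : IsIrreducibleFGroup F β) : IsIrreducibleFGroup F α := by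
  obtain ⟨hnt, hmin⟩ := h
  constructor
  · exact Equiv.nontrivial e.toEquiv
  · intro H hH
    have := hmin (H.map e.toMonoidHom) ?_
    · rcases this with h1 | h1
      · exact Or.inl ((Subgroup.map_eq_bot_iff_of_injective (H := H) (f := e.toMonoidHom) e.injective).mp h1)
      · right
        have := congrArg (Subgroup.comap e.toMonoidHom) h1
        rwa [Subgroup.comap_map_eq_self_of_injective e.injective,
          Subgroup.comap_top] at this
    · constructor
      · exact hH.1.map e.toMonoidHom e.surjective
      · rintro f x ⟨a, ha, rfl⟩
        exact ⟨f • a, hH.2 f a ha, he f a⟩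


universe u

theorem goursat {F : Type*} [Group F] (n : ℕ) :
    ∀ (A : Fin n → Type u) (grpA : ∀ i, Group (A i))
      (actA : ∀ i, MulDistribMulAction F (A i))
      (_hfin : ∀ i, Finite (A i))
      (_hirr : ∀ i, IsIrreducibleFGroup F (A i))
      (X : Subgroup (∀ i, A i))
      (_hsurj : ∀ (i : Fin n) (a : A i), ∃ x ∈ X, x i = a)
      (hstab : ∀ (f : F) (x : ∀ i, A i), x ∈ X → f • x ∈ X),
      ∃ (r : ℕ) (D : Fin r → Type u) (grpD : ∀ i, Group (D i))
        (actD : ∀ i, MulDistribMulAction F (D i)),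
        (∀ i, Finite (D i)) ∧
        (∀ i, IsIrreducibleFGroup F (D i)) ∧
        ∃ e : X ≃* ∀ i, D i,
          ∀ (f : F) (x : X), e ⟨f • (x : ∀ i, A i), hstab f x x.2⟩ = f • e x := by
  induction n with
  | zero =>
    intro A grpA actA hfin hirr X hsurj hstab
    refine ⟨0, fun _ => PUnit.{u+1}, fun _ => inferInstance,
      fun _ => { smul := fun _ a => a, one_smul := fun _ => rfl,
                 mul_smul := fun _ _ _ => rfl, smul_mul := fun _ _ _ => rfl,
                 smul_one := fun _ => rfl },
      fun _ => inferInstance, fun i => i.elim0, ?_⟩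
    have hsub : Subsingleton (∀ i : Fin 0, A i) := ⟨fun a b => funext fun i => i.elim0⟩
    have hsubX : Subsingleton X := ⟨fun a b => Subtype.ext (Subsingleton.elim _ _)⟩
    refine ⟨{ toFun := fun _ => 1, invFun := fun _ => 1,
              left_inv := fun a => Subsingleton.elim _ _,
              right_inv := fun a => Subsingleton.elim _ _,
              map_mul' := fun a b => Subsingleton.elim _ _ }, fun f x => Subsingleton.elim _ _⟩
  | succ n ih =>
    intro A grpA actA hfin hirr X hsurj hstab
    classical
    set p1 : (∀ i, A i) →* (∀ i : Fin n, A i.succ) :=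
      { toFun := fun x i => x i.succ, map_one' := rfl, map_mul' := fun x y => rfl } with hp1
    set Y : Subgroup (∀ i : Fin n, A i.succ) := X.map p1 with hY
    have hYsurj : ∀ (i : Fin n) (a : A i.succ), ∃ y ∈ Y, y i = a := by
      intro i a
      obtain ⟨x, hx, hxa⟩ := hsurj i.succ a
      exact ⟨p1 x, Subgroup.mem_map_of_mem _ hx, hxa⟩
    have hYstab : ∀ (f : F) (y : ∀ i : Fin n, A i.succ), y ∈ Y → f • y ∈ Y := by
      rintro f y ⟨x, hx, rfl⟩
      exact ⟨f • x, hstab f x hx, rfl⟩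
    obtain ⟨r, D, grpD, actD, hfinD, hirrD, eY, heY⟩ :=
      ih (fun i => A i.succ) (fun i => grpA i.succ) (fun i => actA i.succ)
        (fun i => hfin i.succ) (fun i => hirr i.succ) Y hYsurj hYstab
    set ρ : X →* Y := p1.subgroupMap X with hρ
    have hρval : ∀ x : X, (ρ x : ∀ i : Fin n, A i.succ) = p1 (x : ∀ i, A i) := fun x => rfl
    have key : ∀ x : ∀ i, A i, p1 x = 1 → x = Pi.mulSingle 0 (x 0) := by
      intro x hx
      funext j
      rcases Fin.eq_zero_or_eq_succ j with rfl | ⟨k, rfl⟩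
      · simp
      · have hk := congrFun hx k
        simp only [hp1, MonoidHom.coe_mk, OneHom.coe_mk, Pi.one_apply] at hk
        rw [hk, Pi.mulSingle_eq_of_ne (Fin.succ_ne_zero k)]
    have smul_single : ∀ (f : F) (b : A 0),
        f • Pi.mulSingle (0 : Fin (n + 1)) b = Pi.mulSingle 0 (f • b) := by
      intro f b
      funext j
      rcases Fin.eq_zero_or_eq_succ j with rfl | ⟨k, rfl⟩
      · simp
      · simp [Pi.mulSingle_eq_of_ne (Fin.succ_ne_zero k)]
    have p1_single : ∀ b : A 0, p1 (Pi.mulSingle 0 b) = 1 := by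
      intro b
      funext k
      simp only [hp1, MonoidHom.coe_mk, OneHom.coe_mk, Pi.one_apply]
      rw [Pi.mulSingle_eq_of_ne (Fin.succ_ne_zero k)]
    set L : Subgroup (A 0) := X.comap (MonoidHom.mulSingle A 0) with hLdef
    have hmemL : ∀ b : A 0, b ∈ L ↔ Pi.mulSingle 0 b ∈ X := fun b => Iff.rfl
    have hLnf : IsNormalFSubgroup F L := by
      constructor
      · constructor
        intro b hb a
        obtain ⟨x, hx, hx0⟩ := hsurj 0 a
        have hmem : x * Pi.mulSingle 0 b * x⁻¹ ∈ X :=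
          mul_mem (mul_mem hx ((hmemL b).mp hb)) (inv_mem hx)
        have hxeq : x * Pi.mulSingle 0 b * x⁻¹ = Pi.mulSingle 0 (a * b * a⁻¹) := by
          funext j
          rcases Fin.eq_zero_or_eq_succ j with rfl | ⟨k, rfl⟩
          · simp [hx0]
          · simp [Pi.mulSingle_eq_of_ne (Fin.succ_ne_zero k)]
        rw [hmemL, ← hxeq]
        exact hmem
      · intro f b hb
        rw [hmemL, ← smul_single]
        exact hstab f _ ((hmemL b).mp hb)
    rcases (hirr 0).2 L hLnf with hL | hL
    · -- L = ⊥ : X ≅ Y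
      have hinj : Function.Injective ρ := by
        rw [injective_iff_map_eq_one]
        intro x hx
        have hval : p1 (x : ∀ i, A i) = 1 := congrArg Subtype.val hx
        have hx1 : (x : ∀ i, A i) = Pi.mulSingle 0 ((x : ∀ i, A i) 0) := key _ hval
        have h0 : (x : ∀ i, A i) 0 ∈ L := by
          rw [hmemL, ← hx1]; exact x.2
        rw [hL, Subgroup.mem_bot] at h0
        apply Subtype.ext
        rw [hx1, h0, Pi.mulSingle_one]
        rfl
      set e' : X ≃* Y := MulEquiv.ofBijective ρ ⟨hinj, p1.subgroupMap_surjective X⟩ with he'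
      have he'val : ∀ x : X, e' x = ρ x := fun x => rfl
      refine ⟨r, D, grpD, actD, hfinD, hirrD, e'.trans eY, ?_⟩
      intro f x
      have hval : ρ ⟨f • (x : ∀ i, A i), hstab f x x.2⟩
          = ⟨f • (ρ x : ∀ i : Fin n, A i.succ), hYstab f _ (ρ x).2⟩ := Subtype.ext rfl
      show eY (e' ⟨f • (x : ∀ i, A i), hstab f x x.2⟩) = f • eY (e' x)
      rw [he'val, he'val, hval]
      exact heY f (ρ x)
    · -- L = ⊤ : X ≅ A 0 × Y
      have hLtop : ∀ b : A 0, Pi.mulSingle 0 b ∈ X := by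
        intro b
        rw [← hmemL, hL]
        trivial
      set D' : Fin (r + 1) → Type u := Fin.cons (A 0) D with hD'
      set grpD' : ∀ i, Group (D' i) := Fin.cases (grpA 0) grpD with hgrpD'
      set actD' : ∀ i, MulDistribMulAction F (D' i) := Fin.cases (actA 0) actD with hactD'
      have cons_mul : ∀ (a b : D' 0) (g h : ∀ i : Fin r, D i),
          (Fin.cons (α := D') a g) * (Fin.cons (α := D') b h)
            = Fin.cons (α := D') (a * b) (g * h) := by
        intro a b g h
        funext j
        rcases Fin.eq_zero_or_eq_succ j with rfl | ⟨k, rfl⟩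
        · rfl
        · rfl
      have smul_cons : ∀ (f : F) (a : D' 0) (g : ∀ i : Fin r, D i),
          f • (Fin.cons (α := D') a g) = Fin.cons (α := D') (f • a) (f • g) := by
        intro f a g
        funext j
        rcases Fin.eq_zero_or_eq_succ j with rfl | ⟨k, rfl⟩
        · rfl
        · rfl
      set Φ : X →* ∀ i, D' i :=
        { toFun := fun x => Fin.cons ((x : ∀ i, A i) 0) (eY (ρ x)),
          map_one' := by
            show Fin.cons (α := D') ((1 : ∀ i, A i) 0) (eY (ρ 1)) = 1
            rw [map_one, map_one]
            funext j
            rcases Fin.eq_zero_or_eq_succ j with rfl | ⟨k, rfl⟩ <;> rfl,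
          map_mul' := by
            intro x y
            show Fin.cons (α := D') ((x : ∀ i, A i) 0 * (y : ∀ i, A i) 0) (eY (ρ (x * y)))
              = _
            rw [map_mul, map_mul]
            exact (cons_mul _ _ _ _).symm } with hΦ
      have hΦval : ∀ x : X, Φ x = Fin.cons (α := D') ((x : ∀ i, A i) 0) (eY (ρ x)) :=
        fun x => rfl
      have hΦinj : Function.Injective Φ := by
        rw [injective_iff_map_eq_one]
        intro x hx
        have h0 : (x : ∀ i, A i) 0 = 1 := by
          have := congrFun hx 0
          exact this
        have hs : eY (ρ x) = 1 := by
          funext k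
          have := congrFun hx k.succ
          exact this
        have hρ1 : ρ x = 1 := eY.injective (by rw [hs, map_one])
        have hval : p1 (x : ∀ i, A i) = 1 := congrArg Subtype.val hρ1
        apply Subtype.ext
        rw [key _ hval, h0, Pi.mulSingle_one]
        rfl
      have hΦsurj : Function.Surjective Φ := by
        intro d
        set y : Y := eY.symm (fun k => d k.succ) with hy
        obtain ⟨x', hx'X, hx'⟩ := y.2
        set b : A 0 := (x' 0)⁻¹ * (show A 0 from d 0) with hb
        have hxX : x' * Pi.mulSingle 0 b ∈ X := mul_mem hx'X (hLtop b)
        refine ⟨⟨x' * Pi.mulSingle 0 b, hxX⟩, ?_⟩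
        have hρy : ρ ⟨x' * Pi.mulSingle 0 b, hxX⟩ = y := by
          apply Subtype.ext
          rw [hρval]
          show p1 (x' * Pi.mulSingle 0 b) = (y : ∀ i : Fin n, A i.succ)
          rw [map_mul, p1_single, mul_one, hx']
        funext j
        rcases Fin.eq_zero_or_eq_succ j with rfl | ⟨k, rfl⟩
        · show ((x' * Pi.mulSingle 0 b) 0 : A 0) = d 0
          simp [hb]
          exact mul_inv_cancel_left _ _
        · show eY (ρ ⟨x' * Pi.mulSingle 0 b, hxX⟩) k = d k.succ
          rw [hρy, hy]
          exact congrFun (MulEquiv.apply_symm_apply eY _) k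
      refine ⟨r + 1, D', grpD', actD',
        Fin.cases (hfin 0) hfinD, Fin.cases (hirr 0) hirrD,
        MulEquiv.ofBijective Φ ⟨hΦinj, hΦsurj⟩, ?_⟩
      intro f x
      show Φ ⟨f • (x : ∀ i, A i), hstab f x x.2⟩ = f • Φ x
      rw [hΦval, hΦval]
      have h1 : ρ ⟨f • (x : ∀ i, A i), hstab f x x.2⟩
          = ⟨f • (ρ x : ∀ i : Fin n, A i.succ), hYstab f _ (ρ x).2⟩ := Subtype.ext rfl
      rw [h1]
      have h2 : ((⟨f • (x : ∀ i, A i), hstab f x x.2⟩ : X) : ∀ i, A i) 0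
          = f • ((x : ∀ i, A i) 0) := rfl
      rw [h2, heY f (ρ x)]
      exact (smul_cons _ _ _).symm


section Factor

open QuotientGroup

variable {G : Type*} [Group G] (N M K : Subgroup G) [N.Normal] [M.Normal] [K.Normal]

/-- Conjugation by `g` descends to `N ⧸ (K ⊓ N)`. -/
def conjQuot (g : G) : (↥N ⧸ K.subgroupOf N) →* (↥N ⧸ K.subgroupOf N) :=
  QuotientGroup.map _ _ (MulAut.conjNormal g).toMonoidHom
    (by
      intro x hx
      rw [Subgroup.mem_comap]
      rw [Subgroup.mem_subgroupOf] at hx ⊢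
      simpa using Subgroup.Normal.conj_mem ‹K.Normal› _ hx g)

lemma conjQuot_mk (g : G) (x : ↥N) :
    conjQuot N K g (QuotientGroup.mk x) = QuotientGroup.mk (MulAut.conjNormal g x) := rfl

lemma conjQuot_conjQuot (g h : G) (a : ↥N ⧸ K.subgroupOf N) :
    conjQuot N K g (conjQuot N K h a) = conjQuot N K (g * h) a := by
  induction a using QuotientGroup.induction_on with
  | H x =>
    rw [conjQuot_mk, conjQuot_mk, conjQuot_mk, ← MulAut.mul_apply, ← map_mul]

/-- The conjugation automorphism of `N ⧸ (K ⊓ N)` induced by `g : G`. -/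
def conjQuotAut (g : G) : MulAut (↥N ⧸ K.subgroupOf N) :=
  { toFun := conjQuot N K g
    invFun := conjQuot N K g⁻¹
    left_inv := fun a => by
      rw [conjQuot_conjQuot, inv_mul_cancel]
      induction a using QuotientGroup.induction_on with
      | H x => rw [conjQuot_mk, map_one, MulAut.one_apply]
    right_inv := fun a => by
      rw [conjQuot_conjQuot, mul_inv_cancel]
      induction a using QuotientGroup.induction_on with
      | H x => rw [conjQuot_mk, map_one, MulAut.one_apply]
    map_mul' := (conjQuot N K g).map_mul }

/-- `G` acts on `N ⧸ (K ⊓ N)` by conjugation. -/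
def conjQuotHom : G →* MulAut (↥N ⧸ K.subgroupOf N) where
  toFun := conjQuotAut N K
  map_one' := by
    ext a
    induction a using QuotientGroup.induction_on with
    | H x =>
      show conjQuot N K 1 (QuotientGroup.mk x) = QuotientGroup.mk x
      rw [conjQuot_mk, map_one, MulAut.one_apply]
  map_mul' := fun g h => by
    ext a
    show conjQuot N K (g * h) a = conjQuot N K g (conjQuot N K h a)
    rw [conjQuot_conjQuot]

/-- The conjugation action of `G ⧸ M` on `N ⧸ (K ⊓ N)`, when `M ≤ K`. -/
def conjQuotHomBar (hMK : M ≤ K) : (G ⧸ M) →* MulAut (↥N ⧸ K.subgroupOf N) :=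
  QuotientGroup.lift M (conjQuotHom N K)
    (by
      intro m hm
      ext a
      induction a using QuotientGroup.induction_on with
      | H x =>
        show conjQuot N K m (QuotientGroup.mk x) = QuotientGroup.mk x
        rw [conjQuot_mk]
        apply (QuotientGroup.eq (s := K.subgroupOf N)).mpr
        rw [Subgroup.mem_subgroupOf]
        show ((MulAut.conjNormal m x)⁻¹ * x : G) ∈ K
        have h1 : ((MulAut.conjNormal m x)⁻¹ * x : G) = (m * x * m⁻¹)⁻¹ * x := by
          push_cast [MulAut.conjNormal_apply]
          rfl
        rw [h1]
        have hmK : m ∈ K := hMK hm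
        have h3 : (m * (x : G) * m⁻¹)⁻¹ * (x : G)
            = m * ((x : G)⁻¹ * m⁻¹ * ((x : G)⁻¹)⁻¹) := by group
        rw [h3]
        exact mul_mem hmK
          (Subgroup.Normal.conj_mem ‹K.Normal› _ (inv_mem hmK) _))

def factorAct (hMK : M ≤ K) : MulDistribMulAction (G ⧸ M) (↥N ⧸ K.subgroupOf N) :=
  MulDistribMulAction.compHom _ (conjQuotHomBar N M K hMK)

lemma factorAct_mk_smul (hMK : M ≤ K) (g : G) (x : ↥N) :
    (letI := factorAct N M K hMK
    (QuotientGroup.mk g : G ⧸ M) • (QuotientGroup.mk x : ↥N ⧸ K.subgroupOf N))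
      = QuotientGroup.mk (MulAut.conjNormal g x) := rfl

lemma factor_nontrivial (hKN : K < N) : Nontrivial (↥N ⧸ K.subgroupOf N) := by
  obtain ⟨x, hxN, hxK⟩ := SetLike.exists_of_lt hKN
  refine ⟨⟨QuotientGroup.mk ⟨x, hxN⟩, 1, fun h => hxK ?_⟩⟩
  have := (QuotientGroup.eq_one_iff _).mp h
  rwa [Subgroup.mem_subgroupOf] at this

lemma factor_irreducible (hMK : M ≤ K) (hKN : K < N)
    (hmax : ∀ K' : Subgroup G, K'.Normal → K' ≤ N → K < K' → K' = N) :
    letI := factorAct N M K hMK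
    IsIrreducibleFGroup (G ⧸ M) (↥N ⧸ K.subgroupOf N) := by
  letI := factorAct N M K hMK
  refine ⟨factor_nontrivial N K hKN, ?_⟩
  intro B hB
  set B' : Subgroup ↥N := B.comap (QuotientGroup.mk' (K.subgroupOf N)) with hB'
  set C : Subgroup G := B'.map N.subtype with hC
  have hmemC : ∀ g : G, g ∈ C ↔ ∃ h : g ∈ N, QuotientGroup.mk (⟨g, h⟩ : ↥N) ∈ B := by
    intro g
    constructor
    · rintro ⟨y, hy, rfl⟩
      exact ⟨y.2, hy⟩
    · rintro ⟨h, hmem⟩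
      exact ⟨⟨g, h⟩, hmem, rfl⟩
  have hKC : K ≤ C := by
    intro c hc
    refine (hmemC c).mpr ⟨hKN.le hc, ?_⟩
    have : QuotientGroup.mk (⟨c, hKN.le hc⟩ : ↥N) = (1 : ↥N ⧸ K.subgroupOf N) :=
      (QuotientGroup.eq_one_iff _).mpr (by rwa [Subgroup.mem_subgroupOf])
    · rw [this]; exact one_mem B
  have hCN : C ≤ N := by
    rintro c ⟨y, _, rfl⟩; exact y.2
  have hCnormal : C.Normal := by
    constructor
    intro c hc g
    obtain ⟨hcN, hcB⟩ := (hmemC c).mp hc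
    refine (hmemC _).mpr ⟨Subgroup.Normal.conj_mem ‹N.Normal› c hcN g, ?_⟩
    have hconj : (QuotientGroup.mk (⟨g * c * g⁻¹, Subgroup.Normal.conj_mem ‹N.Normal› c hcN g⟩ : ↥N) : ↥N ⧸ K.subgroupOf N)
        = (QuotientGroup.mk g : G ⧸ M) • (QuotientGroup.mk (⟨c, hcN⟩ : ↥N) : ↥N ⧸ K.subgroupOf N) := by
      rw [factorAct_mk_smul]
      exact congrArg QuotientGroup.mk (Subtype.ext (by simp [MulAut.conjNormal_apply]))
    rw [hconj]
    exact hB.2 _ _ hcB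
  by_cases hCK : C ≤ K
  · left
    rw [eq_bot_iff]
    intro b hb
    obtain ⟨y, hy⟩ := QuotientGroup.mk_surjective b
    rw [← hy] at hb ⊢
    have hyC : (y : G) ∈ C := (hmemC _).mpr ⟨y.2, by simpa using hb⟩
    rw [Subgroup.mem_bot, QuotientGroup.eq_one_iff, Subgroup.mem_subgroupOf]
    exact hCK hyC
  · right
    have hKltC : K < C := lt_of_le_of_ne hKC (fun h => hCK (le_of_eq h.symm))
    have hCeq : C = N := hmax C hCnormal hCN hKltC
    rw [eq_top_iff]
    intro b _
    obtain ⟨y, hy⟩ := QuotientGroup.mk_surjective b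
    rw [← hy]
    have : (y : G) ∈ C := by rw [hCeq]; exact y.2
    obtain ⟨h, hmem⟩ := (hmemC _).mp this
    exact hmem

end Factor

/-- A copy of `Fin n` carrying no instances, used to realize small copies of groups. -/
def ShrinkCarrier (n : ℕ) : Type := Fin n

/-- with `M` the intersection of the maximal proper `G`-normal
subgroups of `N`, the subgroup `M` is normal in `G` and `N/M`, with the conjugation
action of `G/M`, is isomorphic as a `(G/M)`-group to a finite direct product of
irreducible `(G/M)`-groups, in which every abelian factor receives a trivial action
from the image of `N`. -/
theorem quotient_by_maxNormalCore_prod_irreducible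
    {G : Type*} [Group G] [Finite G] (N : Subgroup G) [N.Normal] :
    (maxNormalCore N).Normal ∧
    ∃ (r : ℕ) (D : Fin r → Type) (_grp : ∀ i, Group (D i))
      (_act : ∀ i, MulDistribMulAction (G ⧸ maxNormalCore N) (D i)),
      (∀ i, IsIrreducibleFGroup (G ⧸ maxNormalCore N) (D i)) ∧
      ∃ e : (N.map (QuotientGroup.mk' (maxNormalCore N))) ≃* (∀ i, D i),
        (∀ (q : G ⧸ maxNormalCore N)
            (x : N.map (QuotientGroup.mk' (maxNormalCore N))),
          e (MulAut.conjNormal q x) = q • e x) ∧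
        (∀ i, (∀ a b : D i, a * b = b * a) →
          ∀ q ∈ N.map (QuotientGroup.mk' (maxNormalCore N)), ∀ d : D i, q • d = d) := by
  classical
  refine ⟨inferInstance, ?_⟩
  set M := maxNormalCore N with hM
  set 𝒦 : Set (Subgroup G) := {K : Subgroup G | K.Normal ∧ K < N ∧
    ∀ K' : Subgroup G, K'.Normal → K' ≤ N → K < K' → K' = N} with h𝒦
  obtain ⟨n, ⟨κ⟩⟩ := Finite.exists_equiv_fin ↥𝒦
  set K : Fin n → Subgroup G := fun i => (κ.symm i : ↥𝒦).1 with hKdef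
  have hK : ∀ i, K i ∈ 𝒦 := fun i => (κ.symm i).2
  haveI hKnorm : ∀ i, (K i).Normal := fun i => (hK i).1
  have hMN : M ≤ N := inf_le_left
  have hMK : ∀ i, M ≤ K i := fun i => le_trans inf_le_right (sInf_le (hK i))
  have hmemM : ∀ g, g ∈ M ↔ g ∈ N ∧ ∀ i, g ∈ K i := by
    intro g
    rw [hM, maxNormalCore, Subgroup.mem_inf, Subgroup.mem_sInf]
    constructor
    · rintro ⟨h1, h2⟩
      exact ⟨h1, fun i => h2 _ (hK i)⟩
    · rintro ⟨h1, h2⟩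
      refine ⟨h1, fun J hJ => ?_⟩
      have := h2 (κ ⟨J, hJ⟩)
      simpa [hKdef] using this
  -- the irreducible factors as quotients of N
  set A : Fin n → Type _ := fun i => ↥N ⧸ (K i).subgroupOf N with hA
  letI grpA : ∀ i, Group (A i) := fun i => inferInstance
  letI actA : ∀ i, MulDistribMulAction (G ⧸ M) (A i) :=
    fun i => factorAct N M (K i) (hMK i)
  have hfinA : ∀ i, Finite (A i) := fun i => inferInstance
  have hirrA : ∀ i, IsIrreducibleFGroup (G ⧸ M) (A i) :=
    fun i => factor_irreducible N M (K i) (hMK i) (hK i).2.1 (hK i).2.2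
  -- the diagonal homomorphism
  set ψ : ↥N →* ∀ i, A i :=
    { toFun := fun x i => QuotientGroup.mk x
      map_one' := funext fun i => rfl
      map_mul' := fun x y => funext fun i => rfl } with hψ
  set X : Subgroup (∀ i, A i) := ψ.range with hX
  have hψsmul : ∀ (g : G) (x : ↥N),
      ψ ((MulAut.conjNormal g) x) = (QuotientGroup.mk g : G ⧸ M) • ψ x :=
    fun g x => rfl
  have hstabX : ∀ (f : G ⧸ M) (x : ∀ i, A i), x ∈ X → f • x ∈ X := by
    rintro f x ⟨y, rfl⟩
    obtain ⟨g, rfl⟩ := QuotientGroup.mk_surjective f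
    exact ⟨MulAut.conjNormal g y, (hψsmul g y).symm⟩
  have hsurjX : ∀ (i : Fin n) (a : A i), ∃ x ∈ X, x i = a := by
    intro i a
    obtain ⟨y, rfl⟩ := QuotientGroup.mk_surjective a
    exact ⟨ψ y, ⟨y, rfl⟩, rfl⟩
  obtain ⟨r, D, grpD, actD, hfinD, hirrD, e0, he0⟩ :=
    goursat n A grpA actA hfinA hirrA X hsurjX hstabX
  -- identify N/M with X
  set μ : ↥N →* ↥(N.map (QuotientGroup.mk' M)) := (QuotientGroup.mk' M).subgroupMap N
    with hμ
  have hμs : Function.Surjective μ := (QuotientGroup.mk' M).subgroupMap_surjective N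
  have hμval : ∀ y : ↥N, (μ y : G ⧸ M) = QuotientGroup.mk (y : G) := fun y => rfl
  have hker : μ.ker = ψ.ker := by
    ext x
    rw [MonoidHom.mem_ker, MonoidHom.mem_ker]
    have h1 : μ x = 1 ↔ (x : G) ∈ M := by
      rw [Subtype.ext_iff]
      rw [hμval]
      show (QuotientGroup.mk (x : G) : G ⧸ M) = 1 ↔ _
      exact QuotientGroup.eq_one_iff _
    have h2 : ψ x = 1 ↔ ∀ i, (x : G) ∈ K i := by
      rw [funext_iff]
      constructor
      · intro h i
        have := h i
        have h3 : (QuotientGroup.mk x : A i) = 1 := this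
        rw [QuotientGroup.eq_one_iff, Subgroup.mem_subgroupOf] at h3
        exact h3
      · intro h i
        show (QuotientGroup.mk x : A i) = 1
        rw [QuotientGroup.eq_one_iff, Subgroup.mem_subgroupOf]
        exact h i
    rw [h1, h2, hmemM]
    simp [x.2]
  set η : ↥(N.map (QuotientGroup.mk' M)) ≃* ↥X :=
    ((QuotientGroup.quotientKerEquivOfSurjective μ hμs).symm.trans
      (QuotientGroup.quotientMulEquivOfEq hker)).trans
      (QuotientGroup.quotientKerEquivRange ψ) with hη
  have hημ : ∀ y : ↥N, η (μ y) = ⟨ψ y, ⟨y, rfl⟩⟩ := by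
    intro y
    have h1 : (QuotientGroup.quotientKerEquivOfSurjective μ hμs).symm (μ y)
        = QuotientGroup.mk y := by
      apply (QuotientGroup.quotientKerEquivOfSurjective μ hμs).injective
      rw [MulEquiv.apply_symm_apply]
      rfl
    rw [hη]
    simp only [MulEquiv.trans_apply]
    rw [h1, QuotientGroup.quotientMulEquivOfEq_mk]
    rfl
  have hηequiv : ∀ (q : G ⧸ M) (x : ↥(N.map (QuotientGroup.mk' M))),
      η (MulAut.conjNormal q x) = ⟨q • (η x : ∀ i, A i), hstabX q _ (η x).2⟩ := by
    intro q x
    obtain ⟨g, rfl⟩ := QuotientGroup.mk_surjective q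
    obtain ⟨y, rfl⟩ := hμs x
    have h1 : MulAut.conjNormal (QuotientGroup.mk g : G ⧸ M) (μ y)
        = μ (MulAut.conjNormal g y) := by
      apply Subtype.ext
      rw [hμval]
      push_cast [MulAut.conjNormal_apply]
      rfl
    rw [h1, hημ, hημ]
    apply Subtype.ext
    show ψ (MulAut.conjNormal g y) = (QuotientGroup.mk g : G ⧸ M) • (ψ y)
    exact hψsmul g y
  -- shrink the factors to Type 0
  have hex : ∀ i, ∃ m : ℕ, Nonempty (D i ≃ Fin m) := fun i => Finite.exists_equiv_fin (D i)
  choose m hm using hex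
  set D0 : Fin r → Type := fun i => ShrinkCarrier (m i) with hD0
  have eDi : ∀ i, D i ≃ D0 i := fun i =>
    (Classical.choice (hm i)).trans (Equiv.cast rfl)
  letI grpD0 : ∀ i, Group (D0 i) := fun i => Equiv.group (eDi i).symm
  set me : ∀ i, D0 i ≃* D i := fun i =>
    { toEquiv := (eDi i).symm
      map_mul' := fun a b =>
        (eDi i).symm_apply_apply ((eDi i).symm a * (eDi i).symm b) } with hme
  letI actD0 : ∀ i, MulDistribMulAction (G ⧸ M) (D0 i) :=
    fun i => (me i).transportAction
  have hmeequiv : ∀ (i : Fin r) (f : G ⧸ M) (a : D0 i), me i (f • a) = f • me i a :=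
    fun i f a => (me i).apply_symm_apply _
  have hirrD0 : ∀ i, IsIrreducibleFGroup (G ⧸ M) (D0 i) :=
    fun i => isIrreducible_of_iso (me i) (hmeequiv i) (hirrD i)
  set eP : (∀ i, D i) ≃* ∀ i, D0 i := MulEquiv.piCongrRight (fun i => (me i).symm)
    with heP
  have hePval : ∀ (x : ∀ i, D i) (i : Fin r), eP x i = (me i).symm (x i) := fun x i => rfl
  have hePequiv : ∀ (f : G ⧸ M) (x : ∀ i, D i), eP (f • x) = f • eP x := by
    intro f x
    funext i
    rw [hePval]
    show (me i).symm (f • x i) = f • ((eP x) i)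
    rw [hePval]
    apply (me i).injective
    rw [MulEquiv.apply_symm_apply, hmeequiv i, MulEquiv.apply_symm_apply]
  set e : ↥(N.map (QuotientGroup.mk' M)) ≃* ∀ i, D0 i := η.trans (e0.trans eP) with he
  have heval : ∀ x, e x = eP (e0 (η x)) := fun x => rfl
  have heequiv : ∀ (q : G ⧸ M) (x : ↥(N.map (QuotientGroup.mk' M))),
      e (MulAut.conjNormal q x) = q • e x := by
    intro q x
    rw [heval, heval, hηequiv q x]
    have h1 : (⟨q • ((η x) : ∀ i, A i), hstabX q _ (η x).2⟩ : ↥X)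
        = ⟨q • ((η x) : ∀ i, A i), hstabX q ((η x) : ∀ i, A i) (η x).2⟩ := rfl
    rw [h1, he0 q (η x), hePequiv]
  refine ⟨r, D0, grpD0, actD0, hirrD0, e, heequiv, ?_⟩
  -- abelian factors receive trivial action from N/M
  intro i hab q hq d
  set x : ↥(N.map (QuotientGroup.mk' M)) := e.symm (Pi.mulSingle i d) with hx
  have hconj : MulAut.conjNormal q x
      = (⟨q, hq⟩ : ↥(N.map (QuotientGroup.mk' M))) * x
        * (⟨q, hq⟩ : ↥(N.map (QuotientGroup.mk' M)))⁻¹ := by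
    apply Subtype.ext
    push_cast [MulAut.conjNormal_apply]
    rfl
  have h1 := heequiv q x
  rw [hconj, map_mul, map_mul, map_inv] at h1
  have h2 := congrFun h1 i
  rw [hx] at h2
  rw [MulEquiv.apply_symm_apply] at h2
  have h3 : (e ⟨q, hq⟩ * Pi.mulSingle i d * (e ⟨q, hq⟩)⁻¹) i
      = (e ⟨q, hq⟩) i * d * ((e ⟨q, hq⟩) i)⁻¹ := by
    rw [Pi.mul_apply, Pi.mul_apply, Pi.inv_apply, Pi.mulSingle_eq_same]
  rw [h3] at h2
  have h4 : (q • Pi.mulSingle i d) i = q • d := by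
    show q • (Pi.mulSingle i d i) = q • d
    rw [Pi.mulSingle_eq_same]
  rw [h4] at h2
  rw [← h2]
  rw [hab ((e ⟨q, hq⟩) i) d, mul_assoc, mul_inv_cancel, mul_one]
end

section
/- Let F be a group, let G₁,…,G_k be finite irreducible F-groups such that G_i and G_j are not isomorphic as F-groups for i ≠ j, and let m₁,…,m_k be non-negative integers. If G_j is abelian, then the number of surjective F-group morphisms from ∏_{i=1}^k G_i^{m_i} to G_j equals h_F(G_j)^{m_j} − 1. -/
section Aux

variable {F : Type*} [Group F]

/-- smul by an automorphism commutes with `Pi.mulSingle`. -/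
lemma aux_smul_mulSingle {I : Type*} [DecidableEq I] {M : I → Type*}
    [∀ i, Group (M i)] [∀ i, MulDistribMulAction F (M i)] (f : F) (i : I) (x : M i) :
    f • Pi.mulSingle i x = Pi.mulSingle i (f • x) := by
  funext i'
  rcases eq_or_ne i' i with h | h
  · subst h; simp
  · simp [Pi.mulSingle_eq_of_ne h, Pi.smul_apply, smul_one]

/-- Any `F`-morphism between non-`F`-isomorphic irreducible `F`-groups with
abelian target is trivial. -/
lemma aux_fhom_trivial {A B : Type*} [Group A] [Group B]
    [MulDistribMulAction F A] [MulDistribMulAction F B]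
    (hA : IsIrreducibleFGroup F A) (hB : IsIrreducibleFGroup F B)
    (habB : ∀ a b : B, a * b = b * a) (hni : ¬ IsFIso F A B)
    (ψ : A →* B) (hψ : IsFHom F ψ) : ψ = 1 := by
  have hker : IsNormalFSubgroup F ψ.ker := by
    refine ⟨MonoidHom.normal_ker ψ, fun f x hx => ?_⟩
    have : ψ x = 1 := hx
    simp only [MonoidHom.mem_ker, hψ f x, this, smul_one]
  rcases hA.2 ψ.ker hker with hk | hk
  · -- ψ injective
    have hinj : Function.Injective ψ := (MonoidHom.ker_eq_bot_iff ψ).mp hk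
    have hrange : IsNormalFSubgroup F ψ.range := by
      refine ⟨⟨fun n hn g => ?_⟩, fun f y hy => ?_⟩
      · have : g * n * g⁻¹ = n := by
          rw [habB g n]; exact mul_inv_cancel_right n g
        rwa [this]
      · obtain ⟨x, hx⟩ := hy
        exact ⟨f • x, by rw [hψ f x, hx]⟩
    rcases hB.2 ψ.range hrange with hr | hr
    · ext x
      have : ψ x ∈ ψ.range := ⟨x, rfl⟩
      rw [hr] at this
      simpa using this
    · exfalso
      have hsurj : Function.Surjective ψ := MonoidHom.range_eq_top.mp hr
      exact hni ⟨MulEquiv.ofBijective ψ ⟨hinj, hsurj⟩, fun f x => hψ f x⟩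
  · ext x
    have : x ∈ ψ.ker := by rw [hk]; trivial
    simpa using this

end Aux

/-- the number of surjective `F`-group morphisms
`∏ᵢ Gᵢ^{mᵢ} → G_j` with `G_j` abelian is `h_F(G_j)^{m_j} − 1`. -/
theorem count_surjections_abelian
    {F : Type*} [Group F] {k : ℕ} (G : Fin k → Type*)
    [∀ i, Group (G i)] [∀ i, MulDistribMulAction F (G i)] [∀ i, Finite (G i)]
    (hirr : ∀ i, IsIrreducibleFGroup F (G i))
    (hnoniso : ∀ i j, i ≠ j → ¬ IsFIso F (G i) (G j))
    (m : Fin k → ℕ) (j : Fin k)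
    (hab : ∀ a b : G j, a * b = b * a) :
    Nat.card {φ : (∀ i, Fin (m i) → G i) →* G j //
        IsFHom F φ ∧ Function.Surjective φ} = hF F (G j) ^ (m j) - 1 := by
  classical
  letI : CommGroup (G j) := { (inferInstance : Group (G j)) with mul_comm := hab }
  set P := ∀ i, Fin (m i) → G i with hP
  -- coordinate inclusions
  let ι : ∀ i, Fin (m i) → (G i →* P) := fun i r =>
    (MonoidHom.mulSingle (fun i => Fin (m i) → G i) i).comp
      (MonoidHom.mulSingle (fun _ : Fin (m i) => G i) r)
  have hι_apply : ∀ i (r : Fin (m i)) (g : G i),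
      ι i r g = Pi.mulSingle i (Pi.mulSingle r g) := fun _ _ _ => rfl
  have hι_smul : ∀ i (r : Fin (m i)) (f : F) (g : G i),
      ι i r (f • g) = f • ι i r g := by
    intro i r f g
    rw [hι_apply, hι_apply, ← aux_smul_mulSingle, ← aux_smul_mulSingle]
  -- coordinate evaluations
  let ev : Fin (m j) → (P →* G j) := fun r =>
    (Pi.evalMonoidHom (fun _ : Fin (m j) => G j) r).comp
      (Pi.evalMonoidHom (fun i => Fin (m i) → G i) j)
  have hev_apply : ∀ (r : Fin (m j)) (x : P), ev r x = x j r := fun _ _ => rfl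
  -- F-hom property of compositions with inclusions
  have hcomp_fhom : ∀ (φ : P →* G j), IsFHom F φ → ∀ i (r : Fin (m i)),
      IsFHom F (φ.comp (ι i r)) := by
    intro φ hφ i r f g
    simp only [MonoidHom.comp_apply, hι_smul i r f g]
    exact hφ f _
  -- forward map
  let Fwd : {φ : P →* G j // IsFHom F φ} → (Fin (m j) → {ψ : G j →* G j // IsFHom F ψ}) :=
    fun φ r => ⟨φ.1.comp (ι j r), hcomp_fhom φ.1 φ.2 j r⟩
  -- backward map
  let Bwd : (Fin (m j) → {ψ : G j →* G j // IsFHom F ψ}) → {φ : P →* G j // IsFHom F φ} :=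
    fun ψ => ⟨∏ r : Fin (m j), (ψ r).1.comp (ev r), by
      intro f x
      rw [MonoidHom.finset_prod_apply, MonoidHom.finset_prod_apply]
      have hm := map_prod (MulDistribMulAction.toMonoidHom (G j) f)
        (fun r => ((ψ r).1.comp (ev r)) x) Finset.univ
      simp only [MulDistribMulAction.toMonoidHom_apply] at hm
      rw [hm]
      refine Finset.prod_congr rfl fun r _ => ?_
      simp only [MonoidHom.comp_apply, hev_apply]
      have hx : (f • x) j r = f • (x j r) := rfl
      rw [hx, (ψ r).2]⟩
  have hBwd_apply : ∀ (ψ : Fin (m j) → {ψ : G j →* G j // IsFHom F ψ}) (x : P),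
      (Bwd ψ).1 x = ∏ r : Fin (m j), (ψ r).1 (x j r) := by
    intro ψ x
    simp only [Bwd, MonoidHom.finset_prod_apply, MonoidHom.comp_apply, hev_apply]
  -- the equivalence
  have hRight : ∀ ψ, Fwd (Bwd ψ) = ψ := by
    intro ψ
    funext r
    apply Subtype.ext
    ext g
    show (Bwd ψ).1 (ι j r g) = (ψ r).1 g
    rw [hBwd_apply]
    have h1 : (ι j r g) j = Pi.mulSingle (M := fun _ : Fin (m j) => G j) r g := by
      rw [hι_apply]
      exact Pi.mulSingle_eq_same (M := fun i => Fin (m i) → G i) j _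
    simp only [h1]
    refine (Finset.prod_eq_single r (fun r' _ hr' => ?_)
      (fun h => absurd (Finset.mem_univ r) h)).trans ?_
    · rw [Pi.mulSingle_eq_of_ne hr', map_one]
    · rw [Pi.mulSingle_eq_same]
  have hLeft : ∀ φ, Bwd (Fwd φ) = φ := by
    intro φ
    apply Subtype.ext
    have key_j : ∀ (r : Fin (m j)) (g : G j),
        (Bwd (Fwd φ)).1 (ι j r g) = φ.1 (ι j r g) := by
      intro r g
      rw [hBwd_apply]
      have h1 : (ι j r g) j = Pi.mulSingle (M := fun _ : Fin (m j) => G j) r g := by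
        rw [hι_apply]
        exact Pi.mulSingle_eq_same (M := fun i => Fin (m i) → G i) j _
      simp only [h1]
      refine (Finset.prod_eq_single r (fun r' _ hr' => ?_)
        (fun h => absurd (Finset.mem_univ r) h)).trans ?_
      · rw [Pi.mulSingle_eq_of_ne hr', map_one]
      · rw [Pi.mulSingle_eq_same]
        rfl
    have key_ne : ∀ i, i ≠ j → ∀ (r : Fin (m i)) (g : G i),
        (Bwd (Fwd φ)).1 (ι i r g) = φ.1 (ι i r g) := by
      intro i hi r g
      rw [hBwd_apply]
      have h1 : (ι i r g) j = 1 := by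
        rw [hι_apply]
        exact Pi.mulSingle_eq_of_ne (Ne.symm hi) _
      have htr : φ.1.comp (ι i r) = 1 :=
        aux_fhom_trivial (hirr i) (hirr j) hab (hnoniso i j hi) _
          (hcomp_fhom φ.1 φ.2 i r)
      simp only [h1, Pi.one_apply, map_one, Finset.prod_const_one]
      have h2 := DFunLike.congr_fun htr g
      simpa using h2.symm
    have key : ∀ i (r : Fin (m i)) (g : G i),
        (Bwd (Fwd φ)).1 (ι i r g) = φ.1 (ι i r g) := by
      intro i
      rcases eq_or_ne i j with rfl | hi
      · exact key_j
      · exact key_ne i hi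
    have outer : ∀ i, (Bwd (Fwd φ)).1.comp (MonoidHom.mulSingle (fun i => Fin (m i) → G i) i)
        = φ.1.comp (MonoidHom.mulSingle (fun i => Fin (m i) → G i) i) := by
      intro i
      apply MonoidHom.pi_ext
      intro r g
      exact key i r g
    apply MonoidHom.pi_ext
    intro i x
    have := congrArg (fun ψ => ψ x) (outer i)
    exact this
  let e : {φ : P →* G j // IsFHom F φ} ≃ (Fin (m j) → {ψ : G j →* G j // IsFHom F ψ}) :=
    ⟨Fwd, Bwd, hLeft, hRight⟩
  -- counting all F-homs
  have hcard_all : Nat.card {φ : P →* G j // IsFHom F φ} = hF F (G j) ^ (m j) := by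
    rw [Nat.card_congr e, Nat.card_pi]
    simp [hF]
  -- surjectivity ↔ nontriviality
  have hone : IsFHom F (1 : P →* G j) := fun f x => by simp
  have hsurj_iff : ∀ φ : P →* G j, IsFHom F φ → (Function.Surjective φ ↔ φ ≠ 1) := by
    intro φ hφ
    constructor
    · rintro hs rfl
      obtain ⟨a, b, hne⟩ := (hirr j).1
      obtain ⟨x, hx⟩ := hs a
      obtain ⟨y, hy⟩ := hs b
      exact hne (by rw [← hx, ← hy]; rfl)
    · intro hne
      have hrange : IsNormalFSubgroup F φ.range := by
        refine ⟨⟨fun n hn g => ?_⟩, fun f y hy => ?_⟩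
        · have : g * n * g⁻¹ = n := by
            rw [hab g n]; exact mul_inv_cancel_right n g
          rwa [this]
        · obtain ⟨x, hx⟩ := hy
          exact ⟨f • x, by rw [hφ f x, hx]⟩
      rcases (hirr j).2 φ.range hrange with hr | hr
      · exfalso
        apply hne
        ext x
        have : φ x ∈ φ.range := ⟨x, rfl⟩
        rw [hr] at this
        simpa using this
      · exact MonoidHom.range_eq_top.mp hr
  -- finiteness
  haveI : Finite P := by
    have : ∀ i, Finite (Fin (m i) → G i) := fun i => inferInstance
    exact Pi.finite
  haveI : Finite (P →* G j) :=
    Finite.of_injective (fun ψ => (ψ : P → G j)) DFunLike.coe_injective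
  -- final counting
  have e2 : {φ : P →* G j // IsFHom F φ ∧ Function.Surjective φ}
      ≃ {x : {φ : P →* G j // IsFHom F φ} // x ≠ ⟨1, hone⟩} :=
    { toFun := fun x => ⟨⟨x.1, x.2.1⟩, by
        intro h
        have h1 : x.1 = 1 := congrArg Subtype.val h
        exact ((hsurj_iff x.1 x.2.1).mp x.2.2) h1⟩
      invFun := fun x => ⟨x.1.1, x.1.2, (hsurj_iff x.1.1 x.1.2).mpr (by
        intro h
        exact x.2 (Subtype.ext h))⟩
      left_inv := fun x => rfl
      right_inv := fun x => rfl }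
  rw [Nat.card_congr e2, ← hcard_all]
  haveI := Fintype.ofFinite {φ : P →* G j // IsFHom F φ}
  rw [Nat.card_eq_fintype_card, Nat.card_eq_fintype_card]
  have := Fintype.card_subtype_compl (fun x : {φ : P →* G j // IsFHom F φ} => x = ⟨1, hone⟩)
  simp only [Fintype.card_subtype_eq] at this
  exact this
end

section
/- Let F be a group, let G₁,…,G_k be finite irreducible F-groups such that G_i and G_j are not isomorphic as F-groups for i ≠ j, and let m₁,…,m_k be non-negative integers. If G_j is non-abelian, then the number of surjective F-group morphisms from ∏_{i=1}^k G_i^{m_i} to G_j equals m_j · |Aut_F(G_j)|, where Aut_F(G_j) is the group of F-group automorphisms of G_j. -/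
lemma center_eq_bot_of_irred {F G : Type*} [Group F] [Group G] [MulDistribMulAction F G]
    (hirr : IsIrreducibleFGroup F G) (hna : ¬ ∀ a b : G, a * b = b * a) :
    Subgroup.center G = ⊥ := by
  have hN : IsNormalFSubgroup F (Subgroup.center G) := by
    refine ⟨inferInstance, ?_⟩
    intro f x hx
    rw [Subgroup.mem_center_iff] at hx ⊢
    intro g
    calc g * f • x = f • (f⁻¹ • g * x) := by rw [smul_mul', smul_inv_smul]
    _ = f • (x * f⁻¹ • g) := by rw [hx]
    _ = f • x * g := by rw [smul_mul', smul_inv_smul]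
  rcases hirr.2 _ hN with h | h
  · exact h
  · exact absurd (fun a b => Subgroup.mem_center_iff.1 (h ▸ Subgroup.mem_top b) a) hna

-- the coordinate embedding
def emb {k : ℕ} {G : Fin k → Type*} [∀ i, Group (G i)] {m : Fin k → ℕ} (i : Fin k)
    (t : Fin (m i)) : G i →* ∀ i, Fin (m i) → G i :=
  (MonoidHom.mulSingle (fun i => Fin (m i) → G i) i).comp
    (MonoidHom.mulSingle (fun _ : Fin (m i) => G i) t)

lemma emb_def {k : ℕ} {G : Fin k → Type*} [∀ i, Group (G i)] {m : Fin k → ℕ} (i : Fin k)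
    (t : Fin (m i)) (a : G i) :
    emb i t a = Pi.mulSingle i (Pi.mulSingle t a) := rfl

lemma emb_conj {k : ℕ} {G : Fin k → Type*} [∀ i, Group (G i)] {m : Fin k → ℕ} (i : Fin k)
    (t : Fin (m i)) (x : ∀ i, Fin (m i) → G i) (a : G i) :
    x * emb i t a * x⁻¹ = emb i t (x i t * a * (x i t)⁻¹) := by
  funext i' t'
  simp only [emb_def, Pi.mul_apply, Pi.inv_apply]
  rcases eq_or_ne i i' with rfl | h
  · simp only [Pi.mulSingle_eq_same]
    rcases eq_or_ne t t' with rfl | h2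
    · simp
    · simp [Pi.mulSingle_eq_of_ne' h2]
  · simp [Pi.mulSingle_eq_of_ne' h]

lemma emb_smul {F : Type*} [Group F] {k : ℕ} {G : Fin k → Type*} [∀ i, Group (G i)]
    [∀ i, MulDistribMulAction F (G i)] {m : Fin k → ℕ} (i : Fin k) (t : Fin (m i))
    (f : F) (a : G i) : f • emb i t a = emb (G := G) i t (f • a) := by
  funext i' t'
  simp only [emb_def, Pi.smul_apply]
  rcases eq_or_ne i i' with rfl | h
  · simp only [Pi.mulSingle_eq_same]
    rcases eq_or_ne t t' with rfl | h2
    · simp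
    · simp [Pi.mulSingle_eq_of_ne' h2, smul_one]
  · simp [Pi.mulSingle_eq_of_ne' h, smul_one]

lemma emb_commute {k : ℕ} {G : Fin k → Type*} [∀ i, Group (G i)] {m : Fin k → ℕ} (i : Fin k)
    (t : Fin (m i)) (x : ∀ i, Fin (m i) → G i) (hx : x i t = 1) (a : G i) :
    x * emb i t a = emb i t a * x := by
  funext i' t'
  simp only [emb_def, Pi.mul_apply]
  rcases eq_or_ne i i' with rfl | h
  · rcases eq_or_ne t t' with rfl | h2
    · simp [Pi.mulSingle_eq_same, hx]
    · simp [Pi.mulSingle_eq_of_ne' h2]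
  · simp [Pi.mulSingle_eq_of_ne' h]


/-- the number of surjective `F`-group morphisms
`∏ᵢ Gᵢ^{mᵢ} → G_j` with `G_j` non-abelian is `m_j · |Aut_F(G_j)|`. -/
theorem count_surjections_nonabelian
    {F : Type*} [Group F] {k : ℕ} (G : Fin k → Type*)
    [∀ i, Group (G i)] [∀ i, MulDistribMulAction F (G i)] [∀ i, Finite (G i)]
    (hirr : ∀ i, IsIrreducibleFGroup F (G i))
    (hnoniso : ∀ i j, i ≠ j → ¬ IsFIso F (G i) (G j))
    (m : Fin k → ℕ) (j : Fin k)
    (hna : ¬ ∀ a b : G j, a * b = b * a) :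
    Nat.card {φ : (∀ i, Fin (m i) → G i) →* G j //
        IsFHom F φ ∧ Function.Surjective φ} =
      m j * Nat.card {e : G j ≃* G j // ∀ (f : F) (x : G j), e (f • x) = f • e x} := by
  classical
  have ntj : Nontrivial (G j) := (hirr j).1
  have hcent : Subgroup.center (G j) = ⊥ := center_eq_bot_of_irred (hirr j) hna
  -- the candidate bijection
  set Bmap : Fin (m j) → {e : G j ≃* G j // ∀ (f : F) (x : G j), e (f • x) = f • e x} →
      ((∀ i, Fin (m i) → G i) →* G j) :=
    fun t e => e.1.toMonoidHom.comp ((Pi.evalMonoidHom (fun _ : Fin (m j) => G j) t).comp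
      (Pi.evalMonoidHom (fun i => Fin (m i) → G i) j)) with hBmap
  have hBapp : ∀ t e x, Bmap t e x = e.1 (x j t) := fun _ _ _ => rfl
  have hBF : ∀ t e, IsFHom F (Bmap t e) := by
    intro t e f x
    rw [hBapp, hBapp]
    exact e.2 f (x j t)
  have hBsurj : ∀ t e, Function.Surjective (Bmap t e) := by
    intro t e y
    refine ⟨emb j t (e.1.symm y), ?_⟩
    rw [hBapp, emb_def]
    simp
  set B : Fin (m j) × {e : G j ≃* G j // ∀ (f : F) (x : G j), e (f • x) = f • e x} →
      {φ : (∀ i, Fin (m i) → G i) →* G j // IsFHom F φ ∧ Function.Surjective φ} :=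
    fun p => ⟨Bmap p.1 p.2, hBF _ _, hBsurj _ _⟩ with hB
  have hBinj : Function.Injective B := by
    rintro ⟨t, e⟩ ⟨s, e'⟩ h
    have h' : ∀ x : ∀ i, Fin (m i) → G i, e.1 (x j t) = e'.1 (x j s) := by
      intro x
      have h2 : Bmap t e = Bmap s e' := congrArg Subtype.val h
      have h3 := DFunLike.congr_fun h2 x
      rwa [hBapp, hBapp] at h3
    have hts : t = s := by
      by_contra hts
      obtain ⟨y, hy⟩ := exists_ne (1 : G j)
      have := h' (emb j t (e.1.symm y))
      rw [emb_def] at this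
      simp only [Pi.mulSingle_eq_same] at this
      rw [Pi.mulSingle_eq_of_ne' hts] at this
      simp at this
      exact hy this
    subst hts
    have hee : e = e' := by
      apply Subtype.ext
      apply MulEquiv.ext
      intro g
      have := h' (emb j t g)
      rw [emb_def] at this
      simpa using this
    rw [hee]
  have hBsur : Function.Surjective B := by
    rintro ⟨φ, hφF, hφs⟩
    -- each coordinate map
    have hrange : ∀ (i : Fin k) (t : Fin (m i)),
        Function.Surjective (φ.comp (emb i t)) ∨ ∀ a, φ (emb i t a) = 1 := by
      intro i t
      have hns : IsNormalFSubgroup F (φ.comp (emb i t)).range := by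
        constructor
        · constructor
          intro y hy g
          obtain ⟨a, rfl⟩ := hy
          obtain ⟨x, rfl⟩ := hφs g
          refine ⟨x i t * a * (x i t)⁻¹, ?_⟩
          simp only [MonoidHom.comp_apply]
          rw [← emb_conj, map_mul, map_mul, map_inv]
        · intro f y hy
          obtain ⟨a, rfl⟩ := hy
          refine ⟨f • a, ?_⟩
          simp only [MonoidHom.comp_apply]
          rw [← emb_smul, hφF]
      rcases (hirr j).2 _ hns with h | h
      · right
        intro a
        have : φ.comp (emb i t) a ∈ (φ.comp (emb i t)).range := ⟨a, rfl⟩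
        rw [h] at this
        simpa using this
      · left
        exact MonoidHom.range_eq_top.1 h
    -- some coordinate is surjective
    have hex : ∃ (i : Fin k) (t : Fin (m i)), Function.Surjective (φ.comp (emb i t)) := by
      by_contra hno
      push_neg at hno
      have htriv : ∀ (i : Fin k) (t : Fin (m i)) (a : G i), φ (emb i t a) = 1 := by
        intro i t
        rcases hrange i t with h | h
        · exact absurd h (hno i t)
        · exact h
      obtain ⟨y, hy⟩ := exists_ne (1 : G j)
      obtain ⟨x, hx⟩ := hφs y
      have hxk : x ∈ φ.ker := by
        apply Subgroup.pi_mem_of_mulSingle_mem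
        intro i
        have : x i ∈ Subgroup.comap (MonoidHom.mulSingle (fun i => Fin (m i) → G i) i) φ.ker := by
          apply Subgroup.pi_mem_of_mulSingle_mem
          intro t
          have := htriv i t (x i t)
          rw [emb_def] at this
          simpa [Subgroup.mem_comap, MonoidHom.mem_ker, MonoidHom.mulSingle_apply] using this
        simpa [Subgroup.mem_comap, MonoidHom.mem_ker, MonoidHom.mulSingle_apply] using this
      rw [MonoidHom.mem_ker, hx] at hxk
      exact hy hxk
    obtain ⟨i, t, hsurj_n⟩ := hex
    set n : G i →* G j := φ.comp (emb i t) with hn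
    have hnF : ∀ (f : F) (a : G i), n (f • a) = f • n a := by
      intro f a
      rw [hn]
      simp only [MonoidHom.comp_apply]
      rw [← emb_smul, hφF]
    have hker : n.ker = ⊥ := by
      have hns : IsNormalFSubgroup F n.ker := by
        refine ⟨MonoidHom.normal_ker n, ?_⟩
        intro f a ha
        rw [MonoidHom.mem_ker] at ha ⊢
        rw [hnF, ha, smul_one]
      rcases (hirr i).2 _ hns with h | h
      · exact h
      · exfalso
        obtain ⟨y, hy⟩ := exists_ne (1 : G j)
        obtain ⟨a, rfl⟩ := hsurj_n y
        have : a ∈ n.ker := h ▸ Subgroup.mem_top a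
        rw [MonoidHom.mem_ker] at this
        exact hy this
    have hninj : Function.Injective n := (MonoidHom.ker_eq_bot_iff n).1 hker
    have hij : i = j := by
      by_contra hne
      exact hnoniso i j hne ⟨MulEquiv.ofBijective n ⟨hninj, hsurj_n⟩, fun f x => hnF f x⟩
    subst hij
    -- φ factors through coordinate (i, t)
    have key : ∀ x, φ x = n (x i t) := by
      intro x
      have hy1 : ∀ y : (∀ i, Fin (m i) → G i), y i t = 1 → φ y = 1 := by
        intro y hy1
        have hcomm : ∀ g : G i, g * φ y = φ y * g := by
          intro g
          obtain ⟨a, rfl⟩ := hsurj_n g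
          have : n a = φ (emb i t a) := rfl
          rw [this, ← map_mul, ← map_mul, emb_commute i t y hy1 a]
        have hc : φ y ∈ Subgroup.center (G i) := Subgroup.mem_center_iff.2 hcomm
        rw [hcent] at hc
        simpa using hc
      have h1 : (x * (emb i t (x i t))⁻¹) i t = 1 := by
        rw [emb_def]
        simp
      have hxdec : φ x = φ (x * (emb i t (x i t))⁻¹) * n (x i t) := by
        have : n (x i t) = φ (emb i t (x i t)) := rfl
        rw [this, ← map_mul]
        congr 1
        group
      rw [hxdec, hy1 _ h1, one_mul]
    refine ⟨⟨t, ⟨MulEquiv.ofBijective n ⟨hninj, hsurj_n⟩, fun f x => hnF f x⟩⟩, ?_⟩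
    apply Subtype.ext
    apply MonoidHom.ext
    intro x
    rw [hB]
    simp only [hBapp]
    exact (key x).symm
  rw [← Nat.card_congr (Equiv.ofBijective B ⟨hBinj, hBsur⟩), Nat.card_prod,
    Nat.card_eq_fintype_card, Fintype.card_fin]
end

section
/- Let F be a group, let G₁,…,G_k be finite irreducible F-groups such that G_i and G_j are not isomorphic as F-groups for i ≠ j, let m₁,…,m_k be non-negative integers, and fix an index j. The map sending a surjective F-group morphism ∏_{i=1}^k G_i^{m_i} → G_j to its restriction to the block G_j^{m_j} (embedded in the product with identity entries in all other blocks) is injective, and its image is exactly the set of surjective F-group morphisms from G_j^{m_j} to G_j; in particular it gives a bijection between the surjective F-group morphisms ∏_{i=1}^k G_i^{m_i} → G_j and the surjective F-group morphisms G_j^{m_j} → G_j. -/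
section AuxLemmas

lemma smul_mulSingle' {F : Type*} [Group F] {ι : Type*} [DecidableEq ι] (H : ι → Type*)
    [∀ i, Group (H i)] [∀ i, MulDistribMulAction F (H i)] (f : F) (i : ι) (a : H i) :
    f • Pi.mulSingle i a = Pi.mulSingle i (f • a) := by
  funext i'
  rcases eq_or_ne i' i with rfl | h
  · simp
  · simp [Pi.mulSingle_eq_of_ne h, smul_one]

lemma conj_mulSingle' {ι : Type*} [DecidableEq ι] (H : ι → Type*) [∀ i, Group (H i)]
    (x : ∀ i, H i) (i : ι) (a : H i) :
    x * Pi.mulSingle i a * x⁻¹ = Pi.mulSingle i (x i * a * (x i)⁻¹) := by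
  funext i'
  rcases eq_or_ne i' i with rfl | h
  · simp
  · simp [Pi.mulSingle_eq_of_ne h]

variable {F : Type*} [Group F] {k : ℕ} {G : Fin k → Type*}
  [∀ i, Group (G i)] [∀ i, MulDistribMulAction F (G i)]
  {m : Fin k → ℕ} {j : Fin k}

lemma kills_other_blocks
    (hirr : ∀ i, IsIrreducibleFGroup F (G i))
    (hnoniso : ∀ i j, i ≠ j → ¬ IsFIso F (G i) (G j))
    (φ : (∀ i, Fin (m i) → G i) →* G j) (hFh : IsFHom F φ)
    (hs : Function.Surjective φ) {i : Fin k} (hij : i ≠ j) (y : Fin (m i) → G i) :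
    φ (Pi.mulSingle i y) = 1 := by
  set e : ∀ l : Fin (m i), G i →* (∀ i, Fin (m i) → G i) :=
    fun l => (MonoidHom.mulSingle (fun i => Fin (m i) → G i) i).comp
      (MonoidHom.mulSingle (fun _ : Fin (m i) => G i) l) with he
  have he_apply : ∀ (l : Fin (m i)) (a : G i),
      e l a = Pi.mulSingle i (Pi.mulSingle l a) := fun _ _ => rfl
  have hconj : ∀ (l : Fin (m i)) (x : ∀ i, Fin (m i) → G i) (b : G i),
      x * e l b * x⁻¹ = e l (x i l * b * (x i l)⁻¹) := by
    intro l x b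
    rw [he_apply, he_apply, conj_mulSingle', conj_mulSingle']
  have hsmul : ∀ (l : Fin (m i)) (f : F) (b : G i),
      f • e l b = e l (f • b) := by
    intro l f b
    rw [he_apply, he_apply, smul_mulSingle', smul_mulSingle']
  have hkill : ∀ (l : Fin (m i)) (a : G i), φ (e l a) = 1 := by
    intro l a
    have hFh' : IsFHom F (φ.comp (e l)) := by
      intro f x
      simp only [MonoidHom.coe_comp, Function.comp_apply]
      rw [← hsmul, hFh]
    have hnorm : IsNormalFSubgroup F (φ.comp (e l)).range := by
      constructor
      · constructor
        intro n hn g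
        obtain ⟨b, rfl⟩ := hn
        obtain ⟨x, rfl⟩ := hs g
        refine ⟨x i l * b * (x i l)⁻¹, ?_⟩
        simp only [MonoidHom.coe_comp, Function.comp_apply]
        rw [← hconj, map_mul, map_mul, map_inv]
      · rintro f x ⟨b, rfl⟩
        exact ⟨f • b, hFh' f b⟩
    rcases (hirr j).2 _ hnorm with hbot | htop
    · have : φ.comp (e l) a ∈ (φ.comp (e l)).range := ⟨a, rfl⟩
      rw [hbot, Subgroup.mem_bot] at this
      simpa using this
    · exfalso
      have hsurj : Function.Surjective (φ.comp (e l)) :=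
        MonoidHom.range_eq_top.mp htop
      have hkernorm : IsNormalFSubgroup F (φ.comp (e l)).ker := by
        refine ⟨MonoidHom.normal_ker _, ?_⟩
        intro f x hx
        rw [MonoidHom.mem_ker] at hx ⊢
        rw [hFh', hx, smul_one]
      rcases (hirr i).2 _ hkernorm with hbot | htop'
      · have hinj : Function.Injective (φ.comp (e l)) :=
          (MonoidHom.ker_eq_bot_iff _).mp hbot
        exact hnoniso i j hij
          ⟨MulEquiv.ofBijective _ ⟨hinj, hsurj⟩, fun f x => hFh' f x⟩
      · obtain ⟨a, b, hab⟩ := (hirr j).1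
        obtain ⟨a', rfl⟩ := hsurj a
        obtain ⟨b', rfl⟩ := hsurj b
        apply hab
        have ha' : a' ∈ (φ.comp (e l)).ker := htop' ▸ Subgroup.mem_top a'
        have hb' : b' ∈ (φ.comp (e l)).ker := htop' ▸ Subgroup.mem_top b'
        rw [MonoidHom.mem_ker] at ha' hb'
        rw [ha', hb']
  have hcomp : φ.comp (MonoidHom.mulSingle (fun i => Fin (m i) → G i) i) = 1 := by
    apply MonoidHom.pi_ext
    intro l x
    have := hkill l x
    rw [he_apply] at this
    simpa using this
  calc φ (Pi.mulSingle i y)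
      = (φ.comp (MonoidHom.mulSingle (fun i => Fin (m i) → G i) i)) y := rfl
    _ = 1 := by rw [hcomp]; rfl

lemma phi_eq (hirr : ∀ i, IsIrreducibleFGroup F (G i))
    (hnoniso : ∀ i j, i ≠ j → ¬ IsFIso F (G i) (G j))
    (φ : (∀ i, Fin (m i) → G i) →* G j) (hFh : IsFHom F φ)
    (hs : Function.Surjective φ) :
    φ = (φ.comp (MonoidHom.mulSingle (fun i => Fin (m i) → G i) j)).comp
      (Pi.evalMonoidHom (fun i => Fin (m i) → G i) j) := by
  apply MonoidHom.pi_ext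
  intro i x
  rcases eq_or_ne i j with rfl | h
  · simp
  · rw [kills_other_blocks hirr hnoniso φ hFh hs h x]
    simp [Pi.mulSingle_eq_of_ne h.symm]

end AuxLemmas

/-- restriction to the `j`-th block is a bijection from surjective
`F`-group morphisms `∏ᵢ Gᵢ^{mᵢ} → G_j` to surjective `F`-group morphisms
`G_j^{m_j} → G_j`. -/
theorem restriction_to_block_bijective
    {F : Type*} [Group F] {k : ℕ} (G : Fin k → Type*)
    [∀ i, Group (G i)] [∀ i, MulDistribMulAction F (G i)] [∀ i, Finite (G i)]
    (hirr : ∀ i, IsIrreducibleFGroup F (G i))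
    (hnoniso : ∀ i j, i ≠ j → ¬ IsFIso F (G i) (G j))
    (m : Fin k → ℕ) (j : Fin k) :
    Function.Injective
      (fun φ : {φ : (∀ i, Fin (m i) → G i) →* G j //
          IsFHom F φ ∧ Function.Surjective φ} =>
        φ.1.comp (MonoidHom.mulSingle (fun i => Fin (m i) → G i) j)) ∧
    Set.range
      (fun φ : {φ : (∀ i, Fin (m i) → G i) →* G j //
          IsFHom F φ ∧ Function.Surjective φ} =>
        φ.1.comp (MonoidHom.mulSingle (fun i => Fin (m i) → G i) j)) =
      {ψ : (Fin (m j) → G j) →* G j | IsFHom F ψ ∧ Function.Surjective ψ} := by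
  have key : ∀ φ : {φ : (∀ i, Fin (m i) → G i) →* G j //
      IsFHom F φ ∧ Function.Surjective φ},
      φ.1 = (φ.1.comp (MonoidHom.mulSingle (fun i => Fin (m i) → G i) j)).comp
        (Pi.evalMonoidHom (fun i => Fin (m i) → G i) j) :=
    fun φ => phi_eq hirr hnoniso φ.1 φ.2.1 φ.2.2
  constructor
  · intro φ₁ φ₂ hh
    simp only at hh
    apply Subtype.ext
    rw [key φ₁, key φ₂, hh]
  · ext ψ
    constructor
    · rintro ⟨φ, rfl⟩
      constructor
      · intro f x
        simp only [MonoidHom.coe_comp, Function.comp_apply, MonoidHom.mulSingle_apply]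
        rw [← smul_mulSingle', φ.2.1]
      · intro g
        obtain ⟨x, hx⟩ := φ.2.2 g
        refine ⟨x j, ?_⟩
        have h2 := DFunLike.congr_fun (key φ) x
        simp only [MonoidHom.coe_comp, Function.comp_apply, Pi.evalMonoidHom_apply] at h2
        simp only [MonoidHom.coe_comp, Function.comp_apply]
        rw [← h2]
        exact hx
    · rintro ⟨hFψ, hsψ⟩
      refine ⟨⟨ψ.comp (Pi.evalMonoidHom (fun i => Fin (m i) → G i) j), ?_, ?_⟩, ?_⟩
      · intro f x
        exact hFψ f (x j)
      · intro g
        obtain ⟨y, hy⟩ := hsψ g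
        refine ⟨Pi.mulSingle j y, ?_⟩
        simpa using hy
      · ext y
        simp
end

section
/- Let F be a group, let G be a finite irreducible F-group, and let m be a positive integer. The map from Hom_F(G^m, G) to Hom_F(G, G)^m sending an F-group morphism φ : G^m → G to the m-tuple of its restrictions to the m factors (each factor embedded in G^m with identity entries in the other coordinates) is injective. If G is abelian, this map is a bijection. If G is non-abelian, its image is exactly the set of m-tuples in Hom_F(G, G)^m in which at most one coordinate differs from the trivial morphism. Moreover, every element of Hom_F(G^m, G) other than the trivial morphism is surjective. -/
/-- restriction of `F`-group morphisms `G^m → G` to the `m` factors: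
the restrictions are `F`-group morphisms; the resulting map `Hom_F(G^m,G) →
Hom_F(G,G)^m` is injective; it is a bijection when `G` is abelian; when `G` is
non-abelian its image is the set of tuples with at most one nontrivial coordinate;
and every nontrivial element of `Hom_F(G^m, G)` is surjective. -/
theorem hom_pow_to_hom_tuple
    {F G : Type*} [Group F] [Group G] [MulDistribMulAction F G] [Finite G]
    (hirr : IsIrreducibleFGroup F G) (m : ℕ) (hm : 0 < m) :
    (∀ φ : (Fin m → G) →* G, IsFHom F φ →
      ∀ i : Fin m, IsFHom F (φ.comp (MonoidHom.mulSingle (fun _ : Fin m => G) i))) ∧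
    Function.Injective
      (fun φ : {φ : (Fin m → G) →* G // IsFHom F φ} =>
        fun i : Fin m => φ.1.comp (MonoidHom.mulSingle (fun _ : Fin m => G) i)) ∧
    ((∀ a b : G, a * b = b * a) →
      ∀ ψ : Fin m → (G →* G), (∀ i, IsFHom F (ψ i)) →
        ∃ φ : (Fin m → G) →* G, IsFHom F φ ∧
          ∀ i, φ.comp (MonoidHom.mulSingle (fun _ : Fin m => G) i) = ψ i) ∧
    ((¬ ∀ a b : G, a * b = b * a) →
      ∀ ψ : Fin m → (G →* G),
        ((∀ i, IsFHom F (ψ i)) ∧ ∀ i i', ψ i ≠ 1 → ψ i' ≠ 1 → i = i') ↔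
          ∃ φ : (Fin m → G) →* G, IsFHom F φ ∧
            ∀ i, φ.comp (MonoidHom.mulSingle (fun _ : Fin m => G) i) = ψ i) ∧
    (∀ φ : (Fin m → G) →* G, IsFHom F φ → φ ≠ 1 → Function.Surjective φ) := by
  classical
  obtain ⟨hnt, hsub⟩ := hirr
  -- `mulSingle` is `F`-equivariant
  have hsingle : ∀ (f : F) (i : Fin m) (x : G),
      (Pi.mulSingle i (f • x) : Fin m → G) = f • (Pi.mulSingle i x : Fin m → G) := by
    intro f i x
    funext j
    rcases eq_or_ne j i with rfl | h
    · simp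
    · simp [Pi.mulSingle_eq_of_ne h, smul_one]
  -- restrictions of F-homs are F-homs
  have hres : ∀ (φ : (Fin m → G) →* G), IsFHom F φ →
      ∀ i : Fin m, IsFHom F (φ.comp (MonoidHom.mulSingle (fun _ : Fin m => G) i)) := by
    intro φ hφ i f x
    simp only [MonoidHom.comp_apply, MonoidHom.mulSingle_apply]
    rw [hsingle, hφ]
  -- a map is an F-hom iff it is equivariant on the mulSingles
  have hFhom_of_single : ∀ (φ : (Fin m → G) →* G),
      (∀ (f : F) (i : Fin m) (x : G),
        φ (f • (Pi.mulSingle i x : Fin m → G)) = f • φ (Pi.mulSingle i x)) →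
      IsFHom F φ := by
    intro φ h f x
    have key : φ.comp (MulDistribMulAction.toMonoidHom (Fin m → G) f) =
        (MulDistribMulAction.toMonoidHom G f).comp φ := by
      refine MonoidHom.pi_ext fun i y => ?_
      simpa using h f i y
    have := DFunLike.congr_fun key x
    simpa using this
  -- dichotomy: an F-endomorphism of G is trivial or surjective
  have hdich : ∀ χ : G →* G, IsFHom F χ → χ = 1 ∨ Function.Surjective χ := by
    intro χ hχ
    have hnorm : IsNormalFSubgroup F χ.ker := by
      refine ⟨inferInstance, fun f x hx => ?_⟩
      rw [MonoidHom.mem_ker] at hx ⊢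
      rw [hχ, hx, smul_one]
    rcases hsub χ.ker hnorm with h | h
    · exact Or.inr (Finite.injective_iff_surjective.mp
        ((MonoidHom.ker_eq_bot_iff χ).mp h))
    · refine Or.inl (MonoidHom.ext fun x => ?_)
      have hx : x ∈ χ.ker := by rw [h]; trivial
      simpa using hx
  -- if all restrictions are trivial, φ is trivial
  have hone : ∀ (φ : (Fin m → G) →* G),
      (∀ i, φ.comp (MonoidHom.mulSingle (fun _ : Fin m => G) i) = 1) → φ = 1 := by
    intro φ h
    refine MonoidHom.pi_ext fun i x => ?_
    have := DFunLike.congr_fun (h i) x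
    simpa using this
  -- surjectivity of nontrivial F-homs
  have hsurj : ∀ (φ : (Fin m → G) →* G), IsFHom F φ → φ ≠ 1 → Function.Surjective φ := by
    intro φ hφ hne
    have hex : ∃ i, φ.comp (MonoidHom.mulSingle (fun _ : Fin m => G) i) ≠ 1 := by
      by_contra h
      push_neg at h
      exact hne (hone φ h)
    obtain ⟨i, hi⟩ := hex
    rcases hdich _ (hres φ hφ i) with h | h
    · exact absurd h hi
    · intro b
      obtain ⟨u, hu⟩ := h b
      exact ⟨Pi.mulSingle i u, hu⟩
  -- existence for pairwise-commuting tuples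
  have hexists : ∀ ψ : Fin m → (G →* G), (∀ i, IsFHom F (ψ i)) →
      (∀ i j, i ≠ j → ∀ x y, Commute (ψ i x) (ψ j y)) →
      ∃ φ : (Fin m → G) →* G, IsFHom F φ ∧
        ∀ i, φ.comp (MonoidHom.mulSingle (fun _ : Fin m => G) i) = ψ i := by
    intro ψ hψ hc
    have hpair : Pairwise fun i j => ∀ x y, Commute (ψ i x) (ψ j y) :=
      fun i j hij => hc i j hij
    refine ⟨MonoidHom.noncommPiCoprod ψ hpair, hFhom_of_single _ ?_, ?_⟩
    · intro f i x
      rw [← hsingle, MonoidHom.noncommPiCoprod_mulSingle,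
        MonoidHom.noncommPiCoprod_mulSingle, hψ i]
    · intro i
      refine MonoidHom.ext fun x => ?_
      simp
  refine ⟨hres, ?_, ?_, ?_, hsurj⟩
  · -- injectivity
    intro φ₁ φ₂ h
    refine Subtype.ext (MonoidHom.pi_ext fun i x => ?_)
    have := DFunLike.congr_fun (congrFun h i) x
    simpa using this
  · -- abelian case
    intro hab ψ hψ
    exact hexists ψ hψ (fun i j _ x y => hab (ψ i x) (ψ j y))
  · -- non-abelian case
    intro hnab ψ
    constructor
    · rintro ⟨hψF, huniq⟩
      by_cases hex : ∃ i, ψ i ≠ 1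
      · obtain ⟨i₀, hi₀⟩ := hex
        refine ⟨(ψ i₀).comp (Pi.evalMonoidHom (fun _ : Fin m => G) i₀), ?_, ?_⟩
        · intro f x
          simp only [MonoidHom.comp_apply, Pi.evalMonoidHom_apply, Pi.smul_apply]
          exact hψF i₀ f (x i₀)
        · intro i
          refine MonoidHom.ext fun x => ?_
          rcases eq_or_ne i i₀ with rfl | hne
          · simp
          · have h1 : ψ i = 1 := by
              by_contra h
              exact hne (huniq i i₀ h hi₀)
            simp [h1, Pi.mulSingle_eq_of_ne (Ne.symm hne)]
      · push_neg at hex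
        refine ⟨1, fun f x => by simp, fun i => ?_⟩
        rw [hex i]
        refine MonoidHom.ext fun x => ?_
        simp
    · rintro ⟨φ, hφ, hrest⟩
      have hψF : ∀ i, IsFHom F (ψ i) := by
        intro i
        rw [← hrest i]
        exact hres φ hφ i
      refine ⟨hψF, fun i i' hi hi' => ?_⟩
      by_contra hne
      have hsi : Function.Surjective (ψ i) := by
        rcases hdich (ψ i) (hψF i) with h | h
        · exact absurd h hi
        · exact h
      have hsi' : Function.Surjective (ψ i') := by
        rcases hdich (ψ i') (hψF i') with h | h
        · exact absurd h hi'
        · exact h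
      refine hnab fun a b => ?_
      obtain ⟨u, hu⟩ := hsi a
      obtain ⟨v, hv⟩ := hsi' b
      have hc := (Pi.mulSingle_commute hne u v).map φ
      have e1 : φ (Pi.mulSingle i u) = a := by
        have := DFunLike.congr_fun (hrest i) u
        simpa [hu] using this
      have e2 : φ (Pi.mulSingle i' v) = b := by
        have := DFunLike.congr_fun (hrest i') v
        simpa [hv] using this
      rw [e1, e2] at hc
      exact hc.eq
end
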